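/- arXiv:2107.11869 — 2 statements merged into one kernel-verified Lean document; each statement's English description precedes it below -/
import Mathlib

section
/- Let τ_J = exp(C J^{ς/d}) for constants C, ς, d > 0 and suppose a sequence J_n ∈ T = {2^{ld} : l ∈ ℕ} satisfies τ_{J_n} J_n √(log J_n) ≤ R √n < τ_{J_n⁺} J_n⁺ √(log J_n⁺) where J_n⁺ = 2^d J_n (J_n is the largest dyadic J satisfying the inequality). Then there exist constants c, c' > 0 such that c (log n)^{d/ς} ≤ J_n ≤ c' (log n)^{d/ς} for all sufficiently large n. -/
set_option maxHeartbeats 1000000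

private lemma aux_sqrt_le (K : ℝ) (hK : 1 ≤ K) : Real.sqrt K ≤ K := by
  calc Real.sqrt K ≤ Real.sqrt (K ^ 2) := Real.sqrt_le_sqrt (by nlinarith)
  _ = K := Real.sqrt_sq (by linarith)

private lemma aux_le_exp (a K : ℝ) (ha : 0 < a) (hK : 1 ≤ K) :
    K * Real.sqrt (Real.log K) ≤ Real.exp (2 / a * K ^ a) := by
  have hK0 : (0:ℝ) < K := lt_of_lt_of_le one_pos hK
  have hra : (0:ℝ) < K ^ a := Real.rpow_pos_of_pos hK0 a
  have hlog : Real.log K ≤ K ^ a / a := by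
    have h1 : Real.log (K ^ a) ≤ K ^ a := (Real.log_le_sub_one_of_pos hra).trans (by linarith)
    rw [Real.log_rpow hK0] at h1
    rw [le_div_iff₀ ha]
    nlinarith
  have hsq : Real.sqrt (Real.log K) ≤ K := by
    have h1 : Real.log K ≤ K := (Real.log_le_sub_one_of_pos hK0).trans (by linarith)
    exact (Real.sqrt_le_sqrt h1).trans (aux_sqrt_le K hK)
  have hKle : K ≤ Real.exp (K ^ a / a) := by
    nth_rewrite 1 [← Real.exp_log hK0]; exact Real.exp_le_exp.mpr hlog
  calc K * Real.sqrt (Real.log K) ≤ K * K :=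
        mul_le_mul_of_nonneg_left hsq hK0.le
  _ ≤ Real.exp (K ^ a / a) * Real.exp (K ^ a / a) :=
        mul_le_mul hKle hKle hK0.le (Real.exp_pos _).le
  _ = Real.exp (2 / a * K ^ a) := by rw [← Real.exp_add]; ring_nf

/-- In the severely ill-posed regime `τ_J = exp(C J^{ς/d})`, if `J n = 2^{l(n)·d}` is
the largest dyadic dimension satisfying `τ_J · J · √(log J) ≤ R √n` (so the next dyadic
dimension `2^d · J n` violates the inequality), then `J n ≍ (log n)^{d/ς}`. -/
theorem stmt_6 (C ς : ℝ) (d : ℕ) (R : ℝ)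
    (hC : 0 < C) (hς : 0 < ς) (hd : 0 < d) (hR : 0 < R)
    (τ : ℝ → ℝ) (hτ : ∀ J : ℝ, τ J = Real.exp (C * J ^ (ς / (d : ℝ))))
    (l : ℕ → ℕ) (J : ℕ → ℝ) (hJ : ∀ n, J n = (2 : ℝ) ^ (l n * d))
    (hmax : ∀ n : ℕ, 2 ≤ n →
      τ (J n) * J n * Real.sqrt (Real.log (J n)) ≤ R * Real.sqrt n ∧
      R * Real.sqrt n <
        τ (2 ^ d * J n) * (2 ^ d * J n) * Real.sqrt (Real.log (2 ^ d * J n))) :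
    ∃ c c' : ℝ, 0 < c ∧ 0 < c' ∧ ∃ N : ℕ, ∀ n ≥ N,
      c * (Real.log n) ^ ((d : ℝ) / ς) ≤ J n ∧
      J n ≤ c' * (Real.log n) ^ ((d : ℝ) / ς) := by
  have hd' : (0:ℝ) < d := Nat.cast_pos.mpr hd
  set a : ℝ := ς / d with ha_def
  have ha : 0 < a := div_pos hς hd'
  have hinv : a⁻¹ = (d:ℝ) / ς := by rw [ha_def, inv_div]
  set C₂ : ℝ := C + 2 / a with hC₂_def
  have hC₂ : 0 < C₂ := by positivity
  clear_value a C₂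
  refine ⟨((2:ℝ) ^ d)⁻¹ * (1 / (4 * C₂)) ^ ((d:ℝ) / ς), (1 / C) ^ ((d:ℝ) / ς) + 1,
    by positivity, by positivity, ⌈max 3 (max (R ^ 2) (R⁻¹ ^ 4))⌉₊, ?_⟩
  intro n hn
  have hnR : (max 3 (max (R ^ 2) (R⁻¹ ^ 4)) : ℝ) ≤ n :=
    le_trans (Nat.le_ceil _) (Nat.cast_le.mpr hn)
  have hn3 : (3:ℝ) ≤ n := le_trans (le_max_left _ _) hnR
  have hnR2 : R ^ 2 ≤ n := le_trans ((le_max_left _ _).trans (le_max_right _ _)) hnR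
  have hnR4 : R⁻¹ ^ 4 ≤ n := le_trans ((le_max_right _ _).trans (le_max_right _ _)) hnR
  have hn2 : 2 ≤ n := by exact_mod_cast (show (2:ℝ) ≤ n by linarith)
  have hn0 : (0:ℝ) < n := by linarith
  have hlogn : 1 ≤ Real.log n := by
    rw [Real.le_log_iff_exp_le hn0]
    have := Real.exp_one_lt_d9
    linarith
  have hlogR : Real.log R ≤ Real.log n / 2 := by
    have := Real.log_le_log (by positivity) hnR2
    rw [Real.log_pow] at this
    push_cast at this; linarith
  have hlogR4 : -Real.log R ≤ Real.log n / 4 := by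
    have := Real.log_le_log (by positivity) hnR4
    rw [Real.log_pow, Real.log_inv] at this
    push_cast at this; linarith
  have hsqn : (0:ℝ) < Real.sqrt n := Real.sqrt_pos.mpr hn0
  have hlogRs : Real.log (R * Real.sqrt n) = Real.log R + Real.log n / 2 := by
    rw [Real.log_mul (ne_of_gt hR) (ne_of_gt hsqn), Real.log_sqrt hn0.le]
  obtain ⟨h1, h2⟩ := hmax n hn2
  constructor
  · -- lower bound
    set K : ℝ := 2 ^ d * J n with hK_def
    clear_value K
    have hKeq : K = (2:ℝ) ^ (d + l n * d) := by rw [hK_def, hJ n, pow_add]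
    have hK2 : (2:ℝ) ≤ K := by
      rw [hKeq]
      calc (2:ℝ) = 2 ^ 1 := (pow_one 2).symm
      _ ≤ 2 ^ (d + l n * d) := pow_le_pow_right₀ one_le_two (by omega)
    have hK1 : (1:ℝ) ≤ K := by linarith
    have hexp : R * Real.sqrt n < Real.exp (C₂ * K ^ a) := by
      have hτK := hτ K
      have key : τ K * K * Real.sqrt (Real.log K) ≤ Real.exp (C₂ * K ^ a) := by
        rw [hτK, mul_assoc]
        calc Real.exp (C * K ^ a) * (K * Real.sqrt (Real.log K))
            ≤ Real.exp (C * K ^ a) * Real.exp (2 / a * K ^ a) :=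
              mul_le_mul_of_nonneg_left (aux_le_exp a K ha hK1) (Real.exp_pos _).le
        _ = Real.exp (C₂ * K ^ a) := by rw [← Real.exp_add]; congr 1; rw [hC₂_def]; ring
      exact lt_of_lt_of_le h2 key
    have hlt : Real.log n / 4 < C₂ * K ^ a := by
      have := (Real.log_lt_iff_lt_exp (by positivity)).mpr hexp
      rw [hlogRs] at this
      linarith
    have hbase : (0:ℝ) < Real.log n / (4 * C₂) := by positivity
    have hKa : Real.log n / (4 * C₂) < K ^ a := by
      rw [div_lt_iff₀ (by positivity)]
      have h4 : K ^ a * (4 * C₂) = 4 * (C₂ * K ^ a) := by ring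
      rw [h4]; linarith
    have hKgt : (Real.log n / (4 * C₂)) ^ a⁻¹ < K := by
      calc (Real.log n / (4 * C₂)) ^ a⁻¹ < (K ^ a) ^ a⁻¹ :=
            Real.rpow_lt_rpow hbase.le hKa (by positivity)
      _ = K := Real.rpow_rpow_inv (by linarith) (ne_of_gt ha)
    have hsplit : (Real.log n / (4 * C₂)) ^ a⁻¹
        = (1 / (4 * C₂)) ^ ((d:ℝ) / ς) * (Real.log n) ^ ((d:ℝ) / ς) := by
      rw [hinv, div_eq_mul_one_div, mul_comm, Real.mul_rpow (by positivity) (by linarith)]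
    rw [hsplit] at hKgt
    have h2d : (0:ℝ) < (2:ℝ) ^ d := by positivity
    rw [hK_def] at hKgt
    rw [mul_assoc]
    calc ((2:ℝ) ^ d)⁻¹ * ((1 / (4 * C₂)) ^ ((d:ℝ) / ς) * Real.log n ^ ((d:ℝ) / ς))
        ≤ ((2:ℝ) ^ d)⁻¹ * (2 ^ d * J n) := by
          apply mul_le_mul_of_nonneg_left hKgt.le (by positivity)
    _ = J n := by field_simp
  · -- upper bound
    have hX1 : (1:ℝ) ≤ (Real.log n) ^ ((d:ℝ) / ς) :=
      Real.one_le_rpow hlogn (by positivity)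
    rcases Nat.eq_zero_or_pos (l n) with hl0 | hl1
    · rw [hJ n, hl0, zero_mul, pow_zero]
      nlinarith [Real.rpow_nonneg (show (0:ℝ) ≤ 1 / C by positivity) ((d:ℝ) / ς)]
    · have hJ2 : (2:ℝ) ≤ J n := by
        rw [hJ n]
        calc (2:ℝ) = 2 ^ 1 := (pow_one 2).symm
        _ ≤ 2 ^ (l n * d) := pow_le_pow_right₀ one_le_two (by nlinarith)
      have hJ0 : (0:ℝ) < J n := by linarith
      have hsqlog : (1:ℝ) ≤ J n * Real.sqrt (Real.log (J n)) := by
        have hlJ : (1:ℝ)/4 ≤ Real.log (J n) := by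
          have := Real.log_le_log (by norm_num) hJ2
          have h2 := Real.log_two_gt_d9
          linarith
        have : (1:ℝ)/2 ≤ Real.sqrt (Real.log (J n)) := by
          rw [Real.le_sqrt (by norm_num) (by linarith)]
          norm_num; linarith
        nlinarith [Real.sqrt_nonneg (Real.log (J n))]
      have hexp : Real.exp (C * J n ^ a) ≤ R * Real.sqrt n := by
        calc Real.exp (C * J n ^ a) = Real.exp (C * J n ^ a) * 1 := (mul_one _).symm
        _ ≤ Real.exp (C * J n ^ a) * (J n * Real.sqrt (Real.log (J n))) :=
            mul_le_mul_of_nonneg_left hsqlog (Real.exp_pos _).le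
        _ = τ (J n) * J n * Real.sqrt (Real.log (J n)) := by rw [hτ (J n)]; ring
        _ ≤ R * Real.sqrt n := h1
      have hlogle : C * J n ^ a ≤ Real.log n := by
        have := (Real.le_log_iff_exp_le (by positivity)).mpr hexp
        rw [hlogRs] at this
        linarith
      have hJa : J n ^ a ≤ Real.log n / C := by
        rw [le_div_iff₀ hC]; linarith [mul_comm C (J n ^ a)]
      have : J n ≤ (Real.log n / C) ^ a⁻¹ := by
        calc J n = (J n ^ a) ^ a⁻¹ := (Real.rpow_rpow_inv hJ0.le (ne_of_gt ha)).symm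
        _ ≤ (Real.log n / C) ^ a⁻¹ :=
            Real.rpow_le_rpow (Real.rpow_pos_of_pos hJ0 a).le hJa (by positivity)
      have hsplit : (Real.log n / C) ^ a⁻¹
          = (1 / C) ^ ((d:ℝ) / ς) * (Real.log n) ^ ((d:ℝ) / ς) := by
        rw [hinv, div_eq_mul_one_div, mul_comm, Real.mul_rpow (by positivity) (by linarith)]
      rw [hsplit] at this
      nlinarith [Real.rpow_nonneg (show (0:ℝ) ≤ 1 / C by positivity) ((d:ℝ) / ς)]
end

section
/- Let Ĝ and G be symmetric positive definite n×n matrices. Then ‖Ĝ^{−1/2} G^{1/2} − I‖ ≤ (λ_min(Ĝ) + λ_min(G))^{−1/2} · ‖Ĝ − G‖ · ‖Ĝ^{−1/2}‖, where ‖·‖ is the operator norm and M^{1/2} the positive definite square root. -/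
open Matrix LinearMap RealInnerProductSpace


/-- The `ℓ²→ℓ²` operator norm of a real square matrix. -/
noncomputable def matrixOpNorm {n : ℕ} (M : Matrix (Fin n) (Fin n) ℝ) : ℝ :=
  ‖(Matrix.toEuclideanCLM (𝕜 := ℝ) M : EuclideanSpace ℝ (Fin n) →L[ℝ] EuclideanSpace ℝ (Fin n))‖

/-- The positive semidefinite square root of a positive semidefinite matrix (the definition
`Matrix.PosSemidef.sqrt` of the older Mathlib, removed since). -/
noncomputable def Matrix.PosSemidef.sqrt {n : Type*} [Fintype n] [DecidableEq n]
    {A : Matrix n n ℝ} (hA : A.PosSemidef) : Matrix n n ℝ :=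
  (hA.1.eigenvectorUnitary : Matrix n n ℝ) *
    Matrix.diagonal ((↑) ∘ (Real.sqrt ·) ∘ hA.1.eigenvalues) *
    (star (hA.1.eigenvectorUnitary : Matrix n n ℝ))

lemma Matrix.PosSemidef.posSemidef_sqrt {n : Type*} [Fintype n] [DecidableEq n]
    {A : Matrix n n ℝ} (hA : A.PosSemidef) : hA.sqrt.PosSemidef := by
  unfold Matrix.PosSemidef.sqrt
  exact (Matrix.PosSemidef.diagonal (fun i => by simp [Real.sqrt_nonneg])).mul_mul_conjTranspose_same _

lemma Matrix.PosSemidef.sqrt_mul_self {n : Type*} [Fintype n] [DecidableEq n]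
    {A : Matrix n n ℝ} (hA : A.PosSemidef) : hA.sqrt * hA.sqrt = A := by
  unfold Matrix.PosSemidef.sqrt
  conv_rhs => rw [hA.1.spectral_theorem]
  rw [Unitary.conjStarAlgAut_apply]
  have hU : star (hA.1.eigenvectorUnitary : Matrix n n ℝ) * (hA.1.eigenvectorUnitary : Matrix n n ℝ) = 1 :=
    Unitary.star_mul_self_of_mem (hA.1.eigenvectorUnitary).2
  have hd : Matrix.diagonal ((fun x : ℝ => x) ∘ (fun x => Real.sqrt x) ∘ hA.1.eigenvalues) *
      Matrix.diagonal ((fun x : ℝ => x) ∘ (fun x => Real.sqrt x) ∘ hA.1.eigenvalues) =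
      Matrix.diagonal (RCLike.ofReal ∘ hA.1.eigenvalues) := by
    rw [Matrix.diagonal_mul_diagonal]
    congr 1; funext i
    simp [Real.mul_self_sqrt (hA.eigenvalues_nonneg i)]
  simp only [Matrix.mul_assoc]
  rw [← Matrix.mul_assoc (star _) _ _, hU, Matrix.one_mul, ← Matrix.mul_assoc _ _ (star _), hd]

lemma isSymmetric_toEuclideanCLM {n : ℕ} {A : Matrix (Fin n) (Fin n) ℝ}
    (hA : A.IsHermitian) :
    LinearMap.IsSymmetric
      ((Matrix.toEuclideanCLM (𝕜 := ℝ) A :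
        EuclideanSpace ℝ (Fin n) →L[ℝ] EuclideanSpace ℝ (Fin n)) :
        EuclideanSpace ℝ (Fin n) →ₗ[ℝ] EuclideanSpace ℝ (Fin n)) := by
  have h1 : _root_.IsSelfAdjoint (Matrix.toEuclideanCLM (𝕜 := ℝ) A) := by
    rw [_root_.IsSelfAdjoint, ← map_star]
    exact congrArg _ hA
  exact h1.isSymmetric

lemma clm_eigenvalues_mem_spectrum {n : ℕ} {A : Matrix (Fin (n+1)) (Fin (n+1)) ℝ}
    (hA : A.IsHermitian) (i : Fin (n+1)) :
    (isSymmetric_toEuclideanCLM hA).eigenvalues (finrank_euclideanSpace_fin) i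
      ∈ spectrum ℝ A := by
  have h := ((isSymmetric_toEuclideanCLM hA).hasEigenvalue_eigenvalues
    finrank_euclideanSpace_fin i).mem_spectrum
  have h2 : spectrum ℝ ((Matrix.toEuclideanCLM (𝕜 := ℝ) A :
      EuclideanSpace ℝ (Fin (n+1)) →L[ℝ] EuclideanSpace ℝ (Fin (n+1))) :
      EuclideanSpace ℝ (Fin (n+1)) →ₗ[ℝ] EuclideanSpace ℝ (Fin (n+1))) = spectrum ℝ A := by
    rw [Matrix.coe_toEuclideanCLM_eq_toEuclideanLin, Matrix.spectrum_toEuclideanLin]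
  rw [← h2]
  simpa using h

lemma rayleigh_lower {n : ℕ} {A : Matrix (Fin (n+1)) (Fin (n+1)) ℝ}
    (hA : A.IsHermitian) {c : ℝ} (hc : ∀ x ∈ spectrum ℝ A, c ≤ x)
    (v : EuclideanSpace ℝ (Fin (n+1))) :
    c * ‖v‖ ^ 2 ≤ ⟪(Matrix.toEuclideanCLM (𝕜 := ℝ) A) v, v⟫ := by
  set hT := isSymmetric_toEuclideanCLM hA with hTdef
  set hn : Module.finrank ℝ (EuclideanSpace ℝ (Fin (n+1))) = n + 1 :=
    finrank_euclideanSpace_fin with hndef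
  set b := hT.eigenvectorBasis hn with hbdef
  set μ := hT.eigenvalues hn with hμdef
  have hrepr : ∀ i, b.repr ((Matrix.toEuclideanCLM (𝕜 := ℝ) A) v) i = μ i * b.repr v i := by
    intro i
    exact hT.eigenvectorBasis_apply_self_apply hn v i
  have hinner : ⟪(Matrix.toEuclideanCLM (𝕜 := ℝ) A) v, v⟫ =
      ∑ i, (μ i * b.repr v i) * b.repr v i := by
    rw [← b.repr.inner_map_map ((Matrix.toEuclideanCLM (𝕜 := ℝ) A) v) v]
    rw [PiLp.inner_apply]
    refine Finset.sum_congr rfl fun i _ => ?_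
    rw [hrepr i]
    simp [mul_comm]
  have hnorm : ‖v‖ ^ 2 = ∑ i, (b.repr v i) ^ 2 := by
    rw [← real_inner_self_eq_norm_sq, ← b.repr.inner_map_map v v, PiLp.inner_apply]
    refine Finset.sum_congr rfl fun i _ => ?_
    simp [sq]
  rw [hinner, hnorm, Finset.mul_sum]
  refine Finset.sum_le_sum fun i _ => ?_
  have hμi : c ≤ μ i := hc _ (clm_eigenvalues_mem_spectrum hA i)
  have : (b.repr v i) ^ 2 * c ≤ (b.repr v i) ^ 2 * μ i :=
    mul_le_mul_of_nonneg_left hμi (sq_nonneg _)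
  nlinarith [this]

lemma opNorm_le_of_eig {n : ℕ} {A : Matrix (Fin (n+1)) (Fin (n+1)) ℝ}
    (hA : A.IsHermitian) {C : ℝ} (hC : 0 ≤ C)
    (hc : ∀ i, |(isSymmetric_toEuclideanCLM hA).eigenvalues finrank_euclideanSpace_fin i| ≤ C) :
    matrixOpNorm A ≤ C := by
  apply ContinuousLinearMap.opNorm_le_bound _ hC
  intro v
  set hT := isSymmetric_toEuclideanCLM hA
  set hn : Module.finrank ℝ (EuclideanSpace ℝ (Fin (n+1))) = n + 1 :=
    finrank_euclideanSpace_fin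
  set b := hT.eigenvectorBasis hn with hbdef
  set μ := hT.eigenvalues hn with hμdef
  have hsq : ‖(Matrix.toEuclideanCLM (𝕜 := ℝ) A) v‖ ^ 2 ≤ (C * ‖v‖) ^ 2 := by
    have h1 : ‖(Matrix.toEuclideanCLM (𝕜 := ℝ) A) v‖ ^ 2 = ∑ i, (μ i * b.repr v i) ^ 2 := by
      have hrepr : ∀ i, b.repr ((Matrix.toEuclideanCLM (𝕜 := ℝ) A) v) i = μ i * b.repr v i :=
        fun i => hT.eigenvectorBasis_apply_self_apply hn v i
      rw [← real_inner_self_eq_norm_sq, ← b.repr.inner_map_map, PiLp.inner_apply]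
      refine Finset.sum_congr rfl fun i _ => ?_
      rw [hrepr i]
      simp [sq]; rw [← abs_mul, abs_mul_abs_self]
    have h2 : ‖v‖ ^ 2 = ∑ i, (b.repr v i) ^ 2 := by
      rw [← real_inner_self_eq_norm_sq, ← b.repr.inner_map_map v v, PiLp.inner_apply]
      refine Finset.sum_congr rfl fun i _ => ?_
      simp [sq]
    rw [h1, mul_pow, h2, Finset.mul_sum]
    refine Finset.sum_le_sum fun i _ => ?_
    have h3 := hc i
    have h4 : μ i ^ 2 ≤ C ^ 2 := by nlinarith [abs_nonneg (μ i), sq_abs (μ i)]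
    have h5 : (μ i * b.repr v i) ^ 2 = μ i ^ 2 * b.repr v i ^ 2 := by ring
    nlinarith [sq_nonneg (b.repr v i)]
  have h0 : 0 ≤ C * ‖v‖ := mul_nonneg hC (norm_nonneg _)
  nlinarith [norm_nonneg ((Matrix.toEuclideanCLM (𝕜 := ℝ) A) v)]

lemma sqrt_spectrum_lower {n : ℕ} {A : Matrix (Fin (n+1)) (Fin (n+1)) ℝ}
    (hA : A.PosDef) :
    ∀ x ∈ spectrum ℝ (hA.posSemidef.sqrt),
      Real.sqrt (⨅ i, hA.isHermitian.eigenvalues i) ≤ x := by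
  intro x hx
  set S := hA.posSemidef.sqrt with hSdef
  have hS : S.PosSemidef := hA.posSemidef.posSemidef_sqrt
  have hx0 : 0 ≤ x := by
    have hx' := hx
    rw [Matrix.IsHermitian.spectrum_real_eq_range_eigenvalues hS.1] at hx'
    obtain ⟨j, hj⟩ := hx'
    exact hj ▸ hS.eigenvalues_nonneg j
  have hsq : x ^ 2 ∈ spectrum ℝ A := by
    rw [spectrum.mem_iff] at hx ⊢
    intro hu
    apply hx
    have key : (algebraMap ℝ _ x - S) * (algebraMap ℝ _ x + S) =
        algebraMap ℝ (Matrix (Fin (n+1)) (Fin (n+1)) ℝ) (x ^ 2) - A := by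
      have hSS : S * S = A := hA.posSemidef.sqrt_mul_self
      simp only [Algebra.algebraMap_eq_smul_one, sub_mul, mul_add, add_mul,
        Matrix.smul_mul, Matrix.mul_smul, smul_smul, one_mul, mul_one, hSS, pow_two]
      abel
    rw [Matrix.isUnit_iff_isUnit_det, isUnit_iff_ne_zero]
    rw [Matrix.isUnit_iff_isUnit_det, isUnit_iff_ne_zero, ← key, Matrix.det_mul] at hu
    exact fun h => hu (by rw [h, zero_mul])
  rw [Matrix.IsHermitian.spectrum_real_eq_range_eigenvalues hA.isHermitian] at hsq
  obtain ⟨j, hj⟩ := hsq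
  have hinf : (⨅ i, hA.isHermitian.eigenvalues i) ≤ x ^ 2 := by
    rw [← hj]
    exact ciInf_le (Finite.bddBelow_range _) j
  calc Real.sqrt (⨅ i, hA.isHermitian.eigenvalues i) ≤ Real.sqrt (x ^ 2) :=
        Real.sqrt_le_sqrt hinf
    _ = x := by rw [Real.sqrt_sq hx0]

lemma iInf_eigenvalues_pos {n : ℕ} {A : Matrix (Fin (n+1)) (Fin (n+1)) ℝ} (hA : A.PosDef) :
    0 < ⨅ i, hA.isHermitian.eigenvalues i := by
  obtain ⟨j, hj⟩ := exists_eq_ciInf_of_finite (f := hA.isHermitian.eigenvalues)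
  rw [← hj]
  exact hA.eigenvalues_pos j

lemma sqrt_diff_bound {n : ℕ} (Ghat G : Matrix (Fin (n+1)) (Fin (n+1)) ℝ)
    (hGhat : Ghat.PosDef) (hG : G.PosDef) :
    Real.sqrt ((⨅ i, hGhat.isHermitian.eigenvalues i) + (⨅ i, hG.isHermitian.eigenvalues i)) *
      matrixOpNorm (hG.posSemidef.sqrt - hGhat.posSemidef.sqrt) ≤
      matrixOpNorm (Ghat - G) := by
  set a := ⨅ i, hGhat.isHermitian.eigenvalues i with hadef
  set bb := ⨅ i, hG.isHermitian.eigenvalues i with hbdef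
  have ha : 0 < a := iInf_eigenvalues_pos hGhat
  have hb : 0 < bb := iInf_eigenvalues_pos hG
  set S := hGhat.posSemidef.sqrt with hSdef
  set T := hG.posSemidef.sqrt with hTdef
  have hSh : S.IsHermitian := hGhat.posSemidef.posSemidef_sqrt.1
  have hTh : T.IsHermitian := hG.posSemidef.posSemidef_sqrt.1
  have hΔ : (T - S).IsHermitian := hTh.sub hSh
  set hsym := isSymmetric_toEuclideanCLM hΔ with hsymdef
  set hn : Module.finrank ℝ (EuclideanSpace ℝ (Fin (n+1))) = n + 1 :=
    finrank_euclideanSpace_fin with hndef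
  set μ := hsym.eigenvalues hn with hμdef
  obtain ⟨i0, -, hmax⟩ := Finset.exists_max_image Finset.univ (fun i => |μ i|)
    ⟨0, Finset.mem_univ 0⟩
  have hΔle : matrixOpNorm (T - S) ≤ |μ i0| :=
    opNorm_le_of_eig hΔ (abs_nonneg _) (fun j => hmax j (Finset.mem_univ j))
  set v := hsym.eigenvectorBasis hn i0 with hvdef
  have hv1 : ‖v‖ = 1 := (hsym.eigenvectorBasis hn).orthonormal.1 i0
  have heig : (Matrix.toEuclideanCLM (𝕜 := ℝ) (T - S)) v = μ i0 • v :=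
    hsym.apply_eigenvectorBasis hn i0
  -- quadratic form bounds
  have hSb : Real.sqrt a ≤ ⟪(Matrix.toEuclideanCLM (𝕜 := ℝ) S) v, v⟫ := by
    have := rayleigh_lower hSh (sqrt_spectrum_lower hGhat) v
    rwa [hv1, one_pow, mul_one] at this
  have hTb : Real.sqrt bb ≤ ⟪(Matrix.toEuclideanCLM (𝕜 := ℝ) T) v, v⟫ := by
    have := rayleigh_lower hTh (sqrt_spectrum_lower hG) v
    rwa [hv1, one_pow, mul_one] at this
  -- matrix identity
  have hDmat : G - Ghat = S * (T - S) + (T - S) * T := by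
    have h1 : S * S = Ghat := hGhat.posSemidef.sqrt_mul_self
    have h2 : T * T = G := hG.posSemidef.sqrt_mul_self
    rw [← h1, ← h2]
    noncomm_ring
  -- inner product identity
  have hinner : ⟪(Matrix.toEuclideanCLM (𝕜 := ℝ) (G - Ghat)) v, v⟫ =
      μ i0 * (⟪(Matrix.toEuclideanCLM (𝕜 := ℝ) S) v, v⟫ +
        ⟪(Matrix.toEuclideanCLM (𝕜 := ℝ) T) v, v⟫) := by
    rw [hDmat, _root_.map_add, _root_.map_mul, _root_.map_mul]
    rw [ContinuousLinearMap.add_apply, ContinuousLinearMap.mul_apply,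
      ContinuousLinearMap.mul_apply, inner_add_left, heig, _root_.map_smul]
    have hsymuse : ⟪(Matrix.toEuclideanCLM (𝕜 := ℝ) (T - S))
        ((Matrix.toEuclideanCLM (𝕜 := ℝ) T) v), v⟫ =
        ⟪(Matrix.toEuclideanCLM (𝕜 := ℝ) T) v,
          (Matrix.toEuclideanCLM (𝕜 := ℝ) (T - S)) v⟫ :=
      hsym ((Matrix.toEuclideanCLM (𝕜 := ℝ) T) v) v
    rw [hsymuse, heig, real_inner_smul_left, real_inner_smul_right]
    ring
  -- Cauchy-Schwarz bound
  have hcs : |⟪(Matrix.toEuclideanCLM (𝕜 := ℝ) (G - Ghat)) v, v⟫| ≤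
      matrixOpNorm (G - Ghat) := by
    calc |⟪(Matrix.toEuclideanCLM (𝕜 := ℝ) (G - Ghat)) v, v⟫| ≤
        ‖(Matrix.toEuclideanCLM (𝕜 := ℝ) (G - Ghat)) v‖ * ‖v‖ := abs_real_inner_le_norm _ _
      _ ≤ (matrixOpNorm (G - Ghat) * ‖v‖) * ‖v‖ :=
        mul_le_mul_of_nonneg_right (ContinuousLinearMap.le_opNorm _ _) (norm_nonneg _)
      _ = matrixOpNorm (G - Ghat) := by rw [hv1]; ring
  have hnormeq : matrixOpNorm (G - Ghat) = matrixOpNorm (Ghat - G) := by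
    unfold matrixOpNorm
    rw [show G - Ghat = -(Ghat - G) by abel, map_neg, norm_neg]
  -- sqrt subadditivity
  have hsqrtadd : Real.sqrt (a + bb) ≤ Real.sqrt a + Real.sqrt bb := by
    have h1 : a + bb ≤ (Real.sqrt a + Real.sqrt bb) ^ 2 := by
      nlinarith [Real.sq_sqrt ha.le, Real.sq_sqrt hb.le, Real.sqrt_nonneg a,
        Real.sqrt_nonneg bb]
    calc Real.sqrt (a + bb) ≤ Real.sqrt ((Real.sqrt a + Real.sqrt bb) ^ 2) :=
          Real.sqrt_le_sqrt h1
      _ = _ := Real.sqrt_sq (by positivity)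
  -- combine
  have hmain : |μ i0| * (Real.sqrt a + Real.sqrt bb) ≤ matrixOpNorm (G - Ghat) := by
    have h2 : |μ i0| * (Real.sqrt a + Real.sqrt bb) ≤
        |μ i0 * (⟪(Matrix.toEuclideanCLM (𝕜 := ℝ) S) v, v⟫ +
          ⟪(Matrix.toEuclideanCLM (𝕜 := ℝ) T) v, v⟫)| := by
      rw [abs_mul]
      refine mul_le_mul_of_nonneg_left ?_ (abs_nonneg _)
      have hnn : 0 ≤ ⟪(Matrix.toEuclideanCLM (𝕜 := ℝ) S) v, v⟫ +
          ⟪(Matrix.toEuclideanCLM (𝕜 := ℝ) T) v, v⟫ := by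
        have := Real.sqrt_nonneg a; have := Real.sqrt_nonneg bb; linarith
      rw [abs_of_nonneg hnn]
      linarith
    rw [← hinner] at h2
    exact h2.trans hcs
  calc Real.sqrt (a + bb) * matrixOpNorm (T - S) ≤ Real.sqrt (a + bb) * |μ i0| :=
        mul_le_mul_of_nonneg_left hΔle (Real.sqrt_nonneg _)
    _ ≤ (Real.sqrt a + Real.sqrt bb) * |μ i0| :=
        mul_le_mul_of_nonneg_right hsqrtadd (abs_nonneg _)
    _ = |μ i0| * (Real.sqrt a + Real.sqrt bb) := by ring
    _ ≤ matrixOpNorm (G - Ghat) := hmain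
    _ = matrixOpNorm (Ghat - G) := hnormeq

lemma matrixOpNorm_mul_le {n : ℕ} (A B : Matrix (Fin n) (Fin n) ℝ) :
    matrixOpNorm (A * B) ≤ matrixOpNorm A * matrixOpNorm B := by
  unfold matrixOpNorm
  rw [_root_.map_mul]
  exact norm_mul_le _ _

lemma matrixOpNorm_nonneg {n : ℕ} (A : Matrix (Fin n) (Fin n) ℝ) : 0 ≤ matrixOpNorm A :=
  norm_nonneg _

/-- For symmetric positive definite matrices `Ĝ` and `G`,
`‖Ĝ^{−1/2} G^{1/2} − I‖ ≤ (λ_min(Ĝ) + λ_min(G))^{−1/2} · ‖Ĝ − G‖ · ‖Ĝ^{−1/2}‖`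
in the operator norm, where `M^{1/2}` denotes the positive semidefinite square root. -/
theorem stmt_9 (n : ℕ) (Ghat G : Matrix (Fin (n + 1)) (Fin (n + 1)) ℝ)
    (hGhat : Ghat.PosDef) (hG : G.PosDef) :
    matrixOpNorm ((hGhat.posSemidef.sqrt)⁻¹ * hG.posSemidef.sqrt - 1) ≤
      (Real.sqrt ((⨅ i, hGhat.isHermitian.eigenvalues i) +
          (⨅ i, hG.isHermitian.eigenvalues i)))⁻¹ *
        matrixOpNorm (Ghat - G) *
        matrixOpNorm ((hGhat.posSemidef.sqrt)⁻¹) := by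
  set a := ⨅ i, hGhat.isHermitian.eigenvalues i with hadef
  set b := ⨅ i, hG.isHermitian.eigenvalues i with hbdef
  have ha : 0 < a := iInf_eigenvalues_pos hGhat
  have hb : 0 < b := iInf_eigenvalues_pos hG
  set S := hGhat.posSemidef.sqrt with hSdef
  set T := hG.posSemidef.sqrt with hTdef
  have hdet : IsUnit S.det := by
    rw [isUnit_iff_ne_zero]
    intro h
    have h1 : S.det * S.det = Ghat.det := by
      rw [← Matrix.det_mul, hGhat.posSemidef.sqrt_mul_self]
    rw [h, mul_zero] at h1
    exact absurd h1.symm (ne_of_gt hGhat.det_pos)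
  have hrw : S⁻¹ * T - 1 = S⁻¹ * (T - S) := by
    rw [Matrix.mul_sub, Matrix.nonsing_inv_mul _ hdet]
  rw [hrw]
  have hc : 0 < Real.sqrt (a + b) := Real.sqrt_pos.mpr (by linarith)
  have h3 : matrixOpNorm (T - S) ≤ (Real.sqrt (a + b))⁻¹ * matrixOpNorm (Ghat - G) := by
    rw [le_inv_mul_iff₀ hc]
    exact sqrt_diff_bound Ghat G hGhat hG
  calc matrixOpNorm (S⁻¹ * (T - S)) ≤ matrixOpNorm S⁻¹ * matrixOpNorm (T - S) :=
        matrixOpNorm_mul_le _ _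
    _ ≤ matrixOpNorm S⁻¹ * ((Real.sqrt (a + b))⁻¹ * matrixOpNorm (Ghat - G)) :=
        mul_le_mul_of_nonneg_left h3 (matrixOpNorm_nonneg _)
    _ = (Real.sqrt (a + b))⁻¹ * matrixOpNorm (Ghat - G) * matrixOpNorm S⁻¹ := by ring
end
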